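/- Let m₁ and n₂ be positive real numbers with n₂ < 4m₁. Then there is no θ ∈ (0, π/2) satisfying 2m₁ + 4n₂ = m₁·((cot(θ/2))² + (tan(θ/2))²) + 4n₂·(tan θ)². (Consequently, in type II-BC₁ with n₂ < 4m₁, every biharmonic regular orbit is harmonic.) -/

import Mathlib

open Real

theorem stmt_9 (m₁ n₂ : ℝ) (hm₁ : 0 < m₁) (hn₂ : 0 < n₂) (h : n₂ < 4 * m₁) :
    ¬ ∃ θ ∈ Set.Ioo 0 (π / 2),
      2 * m₁ + 4 * n₂ =
        m₁ * ((Real.cot (θ / 2)) ^ 2 + (Real.tan (θ / 2)) ^ 2) +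
          4 * n₂ * (Real.tan θ) ^ 2 := by
  rintro ⟨θ, ⟨hθ0, hθπ⟩, heq⟩
  have hπ := Real.pi_pos
  have ht0 : 0 < Real.tan (θ / 2) :=
    Real.tan_pos_of_pos_of_lt_pi_div_two (by linarith) (by linarith)
  have ht1 : Real.tan (θ / 2) < 1 := by
    rw [← Real.tan_pi_div_four]
    exact Real.tan_lt_tan_of_lt_of_lt_pi_div_two (by linarith) (by linarith) (by linarith)
  set t := Real.tan (θ / 2) with htdef
  have hcot : Real.cot (θ / 2) = 1 / t := by
    rw [Real.cot_eq_cos_div_sin, htdef, Real.tan_eq_sin_div_cos, one_div_div]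
  have htan : Real.tan θ = 2 * t / (1 - t ^ 2) := by
    have : θ = 2 * (θ / 2) := by ring
    rw [this, Real.tan_two_mul]
  rw [hcot, htan] at heq
  have ht1' : 1 - t ^ 2 > 0 := by nlinarith
  have htne : t ≠ 0 := ne_of_gt ht0
  have h1ne : (1 - t ^ 2) ≠ 0 := ne_of_gt ht1'
  field_simp at heq
  set u := t ^ 2 with hu
  have hu0 : 0 < u := by positivity
  have hu1 : u < 1 := by nlinarith
  rw [show t ^ 4 = u ^ 2 from by rw [hu]; ring] at heq
  rcases le_or_gt (u ^ 2 - 6 * u + 1) 0 with hc | hc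
  · nlinarith [heq, mul_pos hm₁ (pow_pos (sub_pos.mpr hu1) 4),
      mul_nonneg (mul_pos hn₂ hu0).le (neg_nonneg.mpr hc)]
  · nlinarith [heq, mul_nonneg hm₁.le (sq_nonneg (u ^ 2 - 10 * u + 1)),
      mul_pos (mul_pos (sub_pos.mpr h) hu0) hc]
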